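/- Taylor asymmetry of the outer smoothness indicators: for f C⁶ near x, IS₂(Δx) - IS₀(Δx) = ((13/3)f''(x)f'''(x) - f'(x)f⁽⁴⁾(x))Δx⁵ + O(Δx⁶), so that the fifth-order terms of IS₀ and IS₂ are exactly opposite: IS₀ has Δx⁵-coefficient -(13/6)f''f''' + (1/2)f'f⁽⁴⁾ and IS₂ has +(13/6)f''f''' - (1/2)f'f⁽⁴⁾, while their expansions agree through order Δx⁴. -/

import Mathlib

open Filter Asymptotics Topology Set

private lemma diffAt_iter {g : ℝ → ℝ} {y : ℝ} (k : ℕ) (h : ContDiffAt ℝ (k + 1) g y) :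
    DifferentiableAt ℝ (iteratedDeriv k g) y := by
  obtain ⟨u, hu, hcd⟩ := h.contDiffOn (le_refl _) (by simp)
  obtain ⟨v, hvu, hv, hyv⟩ := mem_nhds_iff.1 hu
  have hEq : Set.EqOn (iteratedDerivWithin k g v) (iteratedDeriv k g) v := fun z hz => by
    simp only [iteratedDerivWithin, iteratedDeriv, iteratedFDerivWithin_of_isOpen k hv hz]
  have hdiff : DifferentiableOn ℝ (iteratedDerivWithin k g v) v :=
    (hcd.mono hvu).differentiableOn_iteratedDerivWithin
      (by exact_mod_cast Nat.lt_succ_self k) hv.uniqueDiffOn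
  exact (((hdiff y hyv).congr hEq.symm (hEq hyv).symm).differentiableAt (hv.mem_nhds hyv))

private lemma eq_iter {g : ℝ → ℝ} {s : Set ℝ} (hs : UniqueDiffOn ℝ s) :
    ∀ k : ℕ, (∀ y ∈ s, ContDiffAt ℝ (k + 1) g y) → ∀ y ∈ s,
      iteratedDerivWithin k g s y = iteratedDeriv k g y := by
  intro k
  induction k with
  | zero => intro _ y _; simp [iteratedDerivWithin_zero]
  | succ k ih =>
    intro hg y hy
    have hg' : ∀ y ∈ s, ContDiffAt ℝ (k + 1) g y := fun z hz =>
      (hg z hz).of_le (by exact_mod_cast Nat.le_succ (k + 1))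
    have hEq : Set.EqOn (iteratedDerivWithin k g s) (iteratedDeriv k g) s :=
      fun z hz => ih hg' z hz
    rw [iteratedDerivWithin_succ, derivWithin_congr hEq (hEq hy),
      (diffAt_iter k (hg' y hy)).derivWithin (hs y hy), iteratedDeriv_succ]

private lemma taylor_key {g : ℝ → ℝ} {x : ℝ} (hg : ContDiffAt ℝ 6 g x) :
    (fun h : ℝ => g (x + h) -
        (g x + deriv g x * h + iteratedDeriv 2 g x / 2 * h ^ 2 + iteratedDeriv 3 g x / 6 * h ^ 3
          + iteratedDeriv 4 g x / 24 * h ^ 4 + iteratedDeriv 5 g x / 120 * h ^ 5))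
      =O[𝓝[≥] (0 : ℝ)] fun h => h ^ 6 := by
  obtain ⟨u, hu, hcd⟩ := hg.contDiffOn (le_refl _) (by simp)
  obtain ⟨ε, hε, hball⟩ := Metric.mem_nhds_iff.1 hu
  set δ := ε / 2 with hδdef
  have hδ : 0 < δ := by positivity
  have hxx : x < x + δ := by linarith
  have hsub : Icc x (x + δ) ⊆ Metric.ball x ε := by
    intro t ht
    rw [Metric.mem_ball, Real.dist_eq, abs_lt]
    constructor <;> [linarith [ht.1]; linarith [ht.2]]
  have hcd' : ContDiffOn ℝ 6 g (Icc x (x + δ)) := hcd.mono (hsub.trans hball)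
  have hCA : ∀ y ∈ Icc x (x + δ), ContDiffAt ℝ 6 g y := fun y hy =>
    hcd.contDiffAt (mem_of_superset (Metric.isOpen_ball.mem_nhds (hsub hy)) hball)
  obtain ⟨C, hC⟩ := exists_taylor_mean_remainder_bound (n := 5) (le_of_lt hxx)
    (by exact_mod_cast hcd')
  have heval : ∀ k : ℕ, k ≤ 5 → iteratedDerivWithin k g (Icc x (x + δ)) x = iteratedDeriv k g x := by
    intro k hk
    exact eq_iter (uniqueDiffOn_Icc hxx) k
      (fun y hy => (hCA y hy).of_le (by exact_mod_cast (by omega : k + 1 ≤ 6)))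
      x (left_mem_Icc.2 (le_of_lt hxx))
  rw [isBigO_iff]
  refine ⟨C, ?_⟩
  filter_upwards [Icc_mem_nhdsGE hδ] with h hh
  have hx6 : x + h ∈ Icc x (x + δ) := by
    constructor <;> [linarith [hh.1]; linarith [hh.2]]
  have hb := hC (x + h) hx6
  have hsum : taylorWithinEval g 5 (Icc x (x + δ)) x (x + h) =
      g x + deriv g x * h + iteratedDeriv 2 g x / 2 * h ^ 2 + iteratedDeriv 3 g x / 6 * h ^ 3
        + iteratedDeriv 4 g x / 24 * h ^ 4 + iteratedDeriv 5 g x / 120 * h ^ 5 := by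
    rw [taylor_within_apply]
    simp only [Finset.sum_range_succ, Finset.sum_range_zero,
      heval 0 (by norm_num), heval 1 (by norm_num), heval 2 (by norm_num),
      heval 3 (by norm_num), heval 4 (by norm_num), heval 5 (by norm_num),
      add_sub_cancel_left, smul_eq_mul]
    simp [Nat.factorial, iteratedDeriv_one, iteratedDeriv_zero]
    ring
  rw [hsum, add_sub_cancel_left] at hb
  calc ‖g (x + h) - (g x + deriv g x * h + iteratedDeriv 2 g x / 2 * h ^ 2
        + iteratedDeriv 3 g x / 6 * h ^ 3 + iteratedDeriv 4 g x / 24 * h ^ 4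
        + iteratedDeriv 5 g x / 120 * h ^ 5)‖ ≤ C * h ^ 6 := hb
    _ = C * ‖h ^ 6‖ := by
        rw [Real.norm_eq_abs, abs_of_nonneg (pow_nonneg hh.1 6)]

private lemma hcomp {g : ℝ → ℝ} {x : ℝ} (hg : ContDiffAt ℝ 6 g x) {a : ℝ} (ha : 0 < a) :
    (fun Δ : ℝ => g (x + a * Δ) -
        (g x + deriv g x * (a * Δ) + iteratedDeriv 2 g x / 2 * (a * Δ) ^ 2
          + iteratedDeriv 3 g x / 6 * (a * Δ) ^ 3 + iteratedDeriv 4 g x / 24 * (a * Δ) ^ 4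
          + iteratedDeriv 5 g x / 120 * (a * Δ) ^ 5))
      =O[𝓝[>] (0 : ℝ)] fun Δ : ℝ => Δ ^ 6 := by
  have htend : Tendsto (fun Δ : ℝ => a * Δ) (𝓝[>] (0 : ℝ)) (𝓝[≥] (0 : ℝ)) := by
    apply tendsto_nhdsWithin_of_tendsto_nhds_of_eventually_within
    · have h0 : Tendsto (fun Δ : ℝ => a * Δ) (𝓝 (0 : ℝ)) (𝓝 (a * 0)) :=
        (continuous_const.mul continuous_id).tendsto 0
      rw [mul_zero] at h0
      exact h0.mono_left nhdsWithin_le_nhds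
    · filter_upwards [self_mem_nhdsWithin] with Δ hΔ
      exact le_of_lt (mul_pos ha hΔ)
  have h1 := (taylor_key hg).comp_tendsto htend
  have h2 : (fun Δ : ℝ => (a * Δ) ^ 6) =O[𝓝[>] (0 : ℝ)] fun Δ : ℝ => Δ ^ 6 :=
    ((isBigO_refl (fun Δ : ℝ => Δ ^ 6) _).const_mul_left (a ^ 6)).congr
      (fun Δ => by ring) (fun _ => rfl)
  exact ((h1.trans h2).congr (fun Δ => rfl) (fun _ => rfl))

private lemma hneg {f : ℝ → ℝ} {x : ℝ} (hf : ContDiffAt ℝ 6 f x) {a : ℝ} (ha : 0 < a) :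
    (fun Δ : ℝ => f (x - a * Δ) -
        (f x - deriv f x * (a * Δ) + iteratedDeriv 2 f x / 2 * (a * Δ) ^ 2
          - iteratedDeriv 3 f x / 6 * (a * Δ) ^ 3 + iteratedDeriv 4 f x / 24 * (a * Δ) ^ 4
          - iteratedDeriv 5 f x / 120 * (a * Δ) ^ 5))
      =O[𝓝[>] (0 : ℝ)] fun Δ : ℝ => Δ ^ 6 := by
  have hFc : ContDiffAt ℝ 6 (fun t => f (2 * x - t)) x := by
    have hx' : ContDiffAt ℝ 6 f (2 * x - x) := by
      rw [show 2 * x - x = x by ring]; exact hf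
    have h1 : ContDiffAt ℝ 6 (fun t : ℝ => 2 * x - t) x :=
      (contDiff_const.sub contDiff_id).contDiffAt
    exact hx'.comp x h1
  have hFk : ∀ k : ℕ, iteratedDeriv k (fun t => f (2 * x - t)) x
      = (-1 : ℝ) ^ k * iteratedDeriv k f x := by
    intro k
    have h1 : (fun t : ℝ => f (2 * x - t)) = fun t : ℝ => f (2 * x + -t) := by
      funext t; norm_num [sub_eq_add_neg]
    have h2 := iteratedDeriv_comp_neg k (fun z : ℝ => f (2 * x + z)) x
    have h3 := congrFun (iteratedDeriv_comp_const_add k f (2 * x)) (-x)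
    rw [h1]
    calc iteratedDeriv k (fun t : ℝ => f (2 * x + -t)) x
        = (-1 : ℝ) ^ k • iteratedDeriv k (fun z : ℝ => f (2 * x + z)) (-x) := h2
      _ = (-1 : ℝ) ^ k * iteratedDeriv k f (2 * x + -x) := by rw [h3, smul_eq_mul]
      _ = (-1 : ℝ) ^ k * iteratedDeriv k f x := by rw [show 2 * x + -x = x by ring]
  have hd : deriv (fun t => f (2 * x - t)) x = -deriv f x := by
    have := hFk 1
    simpa [iteratedDeriv_one] using this
  have h := hcomp hFc ha
  refine h.congr (fun Δ => ?_) (fun _ => rfl)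
  simp only [hFk 2, hFk 3, hFk 4, hFk 5, hd]
  rw [show 2 * x - (x + a * Δ) = x - a * Δ by ring, show 2 * x - x = x by ring]
  ring

theorem IS0_IS2_taylor_asymmetry (f : ℝ → ℝ) (x : ℝ) (hf : ContDiffAt ℝ 6 f x) :
    ((fun Δ : ℝ =>
        ((13/12) * (f (x - 2*Δ) - 2 * f (x - Δ) + f x)^2
          + (1/4) * (f (x - 2*Δ) - 4 * f (x - Δ) + 3 * f x)^2)
        - ((deriv f x)^2 * Δ^2
            + ((13/12) * (iteratedDeriv 2 f x)^2
                - (2/3) * deriv f x * iteratedDeriv 3 f x) * Δ^4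
            + (-(13/6) * iteratedDeriv 2 f x * iteratedDeriv 3 f x
                + (1/2) * deriv f x * iteratedDeriv 4 f x) * Δ^5))
      =O[𝓝[>] (0:ℝ)] fun Δ : ℝ => Δ^6) ∧
    ((fun Δ : ℝ =>
        ((13/12) * (f x - 2 * f (x + Δ) + f (x + 2*Δ))^2
          + (1/4) * (3 * f x - 4 * f (x + Δ) + f (x + 2*Δ))^2)
        - ((deriv f x)^2 * Δ^2
            + ((13/12) * (iteratedDeriv 2 f x)^2
                - (2/3) * deriv f x * iteratedDeriv 3 f x) * Δ^4
            + ((13/6) * iteratedDeriv 2 f x * iteratedDeriv 3 f x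
                - (1/2) * deriv f x * iteratedDeriv 4 f x) * Δ^5))
      =O[𝓝[>] (0:ℝ)] fun Δ : ℝ => Δ^6) ∧
    ((fun Δ : ℝ =>
        (((13/12) * (f x - 2 * f (x + Δ) + f (x + 2*Δ))^2
            + (1/4) * (3 * f x - 4 * f (x + Δ) + f (x + 2*Δ))^2)
          - ((13/12) * (f (x - 2*Δ) - 2 * f (x - Δ) + f x)^2
            + (1/4) * (f (x - 2*Δ) - 4 * f (x - Δ) + 3 * f x)^2))
        - ((13/3) * iteratedDeriv 2 f x * iteratedDeriv 3 f x
            - deriv f x * iteratedDeriv 4 f x) * Δ^5)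
      =O[𝓝[>] (0:ℝ)] fun Δ : ℝ => Δ^6) := by
  have em1 := hneg hf one_pos
  have em2 := hneg hf two_pos
  have ep1 := hcomp hf one_pos
  have ep2 := hcomp hf two_pos
  have h61 : (fun Δ : ℝ => Δ ^ 6) =O[𝓝[>] (0:ℝ)] (fun _ => (1:ℝ)) :=
    (((continuous_pow 6).tendsto 0).mono_left nhdsWithin_le_nhds).isBigO_one ℝ
  have hO1 : ∀ g : ℝ → ℝ, Continuous g →
      (fun Δ : ℝ => g Δ) =O[𝓝[>] (0:ℝ)] (fun _ => (1:ℝ)) := fun g hg =>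
    ((hg.tendsto 0).mono_left nhdsWithin_le_nhds).isBigO_one ℝ
  -- canonical E components, IS0 side
  have hEA : (fun Δ : ℝ => f (x - 2*Δ) - 2 * f (x - Δ) + f x
      - (iteratedDeriv 2 f x * Δ^2 - iteratedDeriv 3 f x * Δ^3
        + 7/12 * iteratedDeriv 4 f x * Δ^4 - 1/4 * iteratedDeriv 5 f x * Δ^5))
      =O[𝓝[>] (0:ℝ)] fun Δ : ℝ => Δ^6 :=
    (em2.sub (em1.const_mul_left 2)).congr
      (fun Δ => by rw [show x - 1*Δ = x - Δ by ring]; ring) (fun _ => rfl)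
  have hEB : (fun Δ : ℝ => f (x - 2*Δ) - 4 * f (x - Δ) + 3 * f x
      - (2 * deriv f x * Δ - 2/3 * iteratedDeriv 3 f x * Δ^3
        + 1/2 * iteratedDeriv 4 f x * Δ^4 - 7/30 * iteratedDeriv 5 f x * Δ^5))
      =O[𝓝[>] (0:ℝ)] fun Δ : ℝ => Δ^6 :=
    (em2.sub (em1.const_mul_left 4)).congr
      (fun Δ => by rw [show x - 1*Δ = x - Δ by ring]; ring) (fun _ => rfl)
  -- IS2 side
  have hEA2 : (fun Δ : ℝ => f x - 2 * f (x + Δ) + f (x + 2*Δ)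
      - (iteratedDeriv 2 f x * Δ^2 + iteratedDeriv 3 f x * Δ^3
        + 7/12 * iteratedDeriv 4 f x * Δ^4 + 1/4 * iteratedDeriv 5 f x * Δ^5))
      =O[𝓝[>] (0:ℝ)] fun Δ : ℝ => Δ^6 :=
    (ep2.sub (ep1.const_mul_left 2)).congr
      (fun Δ => by rw [show x + 1*Δ = x + Δ by ring]; ring) (fun _ => rfl)
  have hEB2 : (fun Δ : ℝ => 3 * f x - 4 * f (x + Δ) + f (x + 2*Δ)
      - (-2 * deriv f x * Δ + 2/3 * iteratedDeriv 3 f x * Δ^3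
        + 1/2 * iteratedDeriv 4 f x * Δ^4 + 7/30 * iteratedDeriv 5 f x * Δ^5))
      =O[𝓝[>] (0:ℝ)] fun Δ : ℝ => Δ^6 :=
    (ep2.sub (ep1.const_mul_left 4)).congr
      (fun Δ => by rw [show x + 1*Δ = x + Δ by ring]; ring) (fun _ => rfl)
  -- bounded polynomial factors
  have hAbar := hO1 (fun Δ : ℝ => iteratedDeriv 2 f x * Δ^2 - iteratedDeriv 3 f x * Δ^3
    + 7/12 * iteratedDeriv 4 f x * Δ^4 - 1/4 * iteratedDeriv 5 f x * Δ^5) (by fun_prop)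
  have hBbar := hO1 (fun Δ : ℝ => 2 * deriv f x * Δ - 2/3 * iteratedDeriv 3 f x * Δ^3
    + 1/2 * iteratedDeriv 4 f x * Δ^4 - 7/30 * iteratedDeriv 5 f x * Δ^5) (by fun_prop)
  have hAbar2 := hO1 (fun Δ : ℝ => iteratedDeriv 2 f x * Δ^2 + iteratedDeriv 3 f x * Δ^3
    + 7/12 * iteratedDeriv 4 f x * Δ^4 + 1/4 * iteratedDeriv 5 f x * Δ^5) (by fun_prop)
  have hBbar2 := hO1 (fun Δ : ℝ => -2 * deriv f x * Δ + 2/3 * iteratedDeriv 3 f x * Δ^3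
    + 1/2 * iteratedDeriv 4 f x * Δ^4 + 7/30 * iteratedDeriv 5 f x * Δ^5) (by fun_prop)
  have hQ0 := hO1 (fun Δ : ℝ =>
    (43/36 * (iteratedDeriv 3 f x)^2 + 91/72 * iteratedDeriv 2 f x * iteratedDeriv 4 f x
      - 7/30 * deriv f x * iteratedDeriv 5 f x)
    + (-(103/72) * iteratedDeriv 3 f x * iteratedDeriv 4 f x
      - 13/24 * iteratedDeriv 2 f x * iteratedDeriv 5 f x) * Δ
    + (745/1728 * (iteratedDeriv 4 f x)^2
      + 223/360 * iteratedDeriv 3 f x * iteratedDeriv 5 f x) * Δ^2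
    - 539/1440 * iteratedDeriv 4 f x * iteratedDeriv 5 f x * Δ^3
    + 1171/14400 * (iteratedDeriv 5 f x)^2 * Δ^4) (by fun_prop)
  have hQ2 := hO1 (fun Δ : ℝ =>
    (43/36 * (iteratedDeriv 3 f x)^2 + 91/72 * iteratedDeriv 2 f x * iteratedDeriv 4 f x
      - 7/30 * deriv f x * iteratedDeriv 5 f x)
    + ((103/72) * iteratedDeriv 3 f x * iteratedDeriv 4 f x
      + 13/24 * iteratedDeriv 2 f x * iteratedDeriv 5 f x) * Δ
    + (745/1728 * (iteratedDeriv 4 f x)^2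
      + 223/360 * iteratedDeriv 3 f x * iteratedDeriv 5 f x) * Δ^2
    + 539/1440 * iteratedDeriv 4 f x * iteratedDeriv 5 f x * Δ^3
    + 1171/14400 * (iteratedDeriv 5 f x)^2 * Δ^4) (by fun_prop)
  -- product terms
  have t1 := ((isBigO_refl (fun Δ : ℝ => Δ^6) (𝓝[>] (0:ℝ))).mul hQ0).congr
    (fun _ => rfl) (fun Δ => mul_one _)
  have t1' := ((isBigO_refl (fun Δ : ℝ => Δ^6) (𝓝[>] (0:ℝ))).mul hQ2).congr
    (fun _ => rfl) (fun Δ => mul_one _)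
  have t2 := (hEA.mul (hEA.trans h61)).congr (fun _ => rfl) (fun Δ => mul_one _)
  have t3 := (hAbar.mul hEA).congr (fun _ => rfl) (fun Δ => one_mul _)
  have t4 := (hEB.mul (hEB.trans h61)).congr (fun _ => rfl) (fun Δ => mul_one _)
  have t5 := (hBbar.mul hEB).congr (fun _ => rfl) (fun Δ => one_mul _)
  have t2' := (hEA2.mul (hEA2.trans h61)).congr (fun _ => rfl) (fun Δ => mul_one _)
  have t3' := (hAbar2.mul hEA2).congr (fun _ => rfl) (fun Δ => one_mul _)
  have t4' := (hEB2.mul (hEB2.trans h61)).congr (fun _ => rfl) (fun Δ => mul_one _)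
  have t5' := (hBbar2.mul hEB2).congr (fun _ => rfl) (fun Δ => one_mul _)
  have S1 := (((t1.add (t2.const_mul_left (13/12))).add (t3.const_mul_left (13/6))).add
    (t4.const_mul_left (1/4))).add (t5.const_mul_left (1/2))
  have S2 := (((t1'.add (t2'.const_mul_left (13/12))).add (t3'.const_mul_left (13/6))).add
    (t4'.const_mul_left (1/4))).add (t5'.const_mul_left (1/2))
  refine ⟨?_, ?_, ?_⟩
  · exact S1.congr (fun Δ => by beta_reduce; ring) (fun _ => rfl)
  · exact S2.congr (fun Δ => by beta_reduce; ring) (fun _ => rfl)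
  · exact (S2.sub S1).congr (fun Δ => by beta_reduce; ring) (fun _ => rfl)
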